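/- Let K ⊆ ℝ be closed, d ∈ ℕ, and ℓ ∈ ℕ, with the assumption that ℓ is even unless K ⊆ [0,∞). If y = (y_n) is a K-moment sequence, then the subsequence ỹ defined by ỹ_k = y_{dk+ℓ} is a K̃-moment sequence, where K̃ = { x^d : x ∈ K }. -/

import Mathlib

open MeasureTheory Filter
open scoped NNReal ENNReal

/-- `y` is a `K`-moment sequence: it admits a nonnegative representing Borel
measure supported in `K`. -/
def IsMomentSeqOn (K : Set ℝ) (y : ℕ → ℝ) : Prop :=
  ∃ μ : Measure ℝ, μ Kᶜ = 0 ∧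
    ∀ n : ℕ, Integrable (fun x : ℝ => x ^ n) μ ∧ y n = ∫ x, x ^ n ∂μ

lemma isClosed_image_pow (K : Set ℝ) (hK : IsClosed K) (d : ℕ) :
    IsClosed ((fun x : ℝ => x ^ d) '' K) := by
  rcases Nat.eq_zero_or_pos d with rfl | hd
  · rcases K.eq_empty_or_nonempty with rfl | hne
    · simp
    · have : (fun x : ℝ => x ^ 0) '' K = {1} := by
        simp [Set.Nonempty.image_const hne]
      rw [this]; exact isClosed_singleton
  · have hprop : IsProperMap fun x : ℝ => x ^ d := by
      rw [isProperMap_iff_tendsto_cocompact]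
      refine ⟨continuous_pow d, ?_⟩
      rw [← Metric.cobounded_eq_cocompact, ← tendsto_norm_atTop_iff_cobounded]
      have : Filter.Tendsto (fun x : ℝ => ‖x‖ ^ d) (Bornology.cobounded ℝ) Filter.atTop :=
        (Filter.tendsto_pow_atTop hd.ne').comp tendsto_norm_cobounded_atTop
      simpa [norm_pow] using this
    exact hprop.isClosedMap _ hK

/-- if `y` is a `K`-moment sequence (`K` closed) and `ℓ` is even unless
`K ⊆ [0,∞)`, then `k ↦ y (d*k+ℓ)` is a `K̃`-moment sequence with `K̃ = {x^d : x ∈ K}`. -/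
theorem subsequence_moment_seq (K : Set ℝ) (hK : IsClosed K) (d ℓ : ℕ)
    (hℓ : Even ℓ ∨ K ⊆ Set.Ici (0 : ℝ)) (y : ℕ → ℝ)
    (hy : IsMomentSeqOn K y) :
    IsMomentSeqOn ((fun x : ℝ => x ^ d) '' K) (fun k => y (d * k + ℓ)) := by
  obtain ⟨μ, hμK, hμy⟩ := hy
  have hf : Measurable fun x : ℝ => x ^ d := (continuous_pow d).measurable
  set g : ℝ → ℝ≥0 := fun x => (x ^ ℓ).toNNReal with hg_def
  have hg : Measurable g := (continuous_pow ℓ).measurable.real_toNNReal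
  set ν : Measure ℝ :=
    Measure.map (fun x : ℝ => x ^ d) (μ.withDensity fun x => (g x : ℝ≥0∞)) with hν_def
  have hKae : ∀ᵐ x ∂μ, x ∈ K := by
    rw [ae_iff]
    simpa [Set.compl_def] using hμK
  have hpos : ∀ᵐ x ∂μ, 0 ≤ x ^ ℓ := by
    refine hKae.mono fun x hx => ?_
    rcases hℓ with h | h
    · exact h.pow_nonneg x
    · exact pow_nonneg (h hx) ℓ
  have hsmul : ∀ k : ℕ, (fun x : ℝ => (g x : ℝ) • (x ^ d) ^ k)
      =ᵐ[μ] fun x : ℝ => x ^ (d * k + ℓ) := by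
    intro k
    refine hpos.mono fun x hx => ?_
    simp only [hg_def, smul_eq_mul, Real.coe_toNNReal _ hx]
    rw [← pow_mul, ← pow_add, add_comm, Nat.mul_comm]
  refine ⟨ν, ?_, fun k => ?_⟩
  · have hmeas : MeasurableSet (((fun x : ℝ => x ^ d) '' K)ᶜ) :=
      (isClosed_image_pow K hK d).measurableSet.compl
    rw [hν_def, Measure.map_apply hf hmeas]
    have hsub : (fun x : ℝ => x ^ d) ⁻¹' ((fun x : ℝ => x ^ d) '' K)ᶜ ⊆ Kᶜ := by
      intro x hx hxK
      exact hx (Set.mem_image_of_mem _ hxK)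
    refine le_antisymm ?_ zero_le
    calc (μ.withDensity fun x => (g x : ℝ≥0∞)) ((fun x : ℝ => x ^ d) ⁻¹' ((fun x : ℝ => x ^ d) '' K)ᶜ)
        ≤ (μ.withDensity fun x => (g x : ℝ≥0∞)) Kᶜ := measure_mono hsub
      _ = ∫⁻ x in Kᶜ, (g x : ℝ≥0∞) ∂μ := withDensity_apply _ hK.measurableSet.compl
      _ = 0 := setLIntegral_measure_zero _ _ hμK
  · obtain ⟨hint, hval⟩ := hμy (d * k + ℓ)
    have hint' : Integrable (fun x : ℝ => (g x : ℝ) • (x ^ d) ^ k) μ :=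
      hint.congr (hsmul k).symm
    have hintwd : Integrable (fun x : ℝ => (x ^ d) ^ k)
        (μ.withDensity fun x => (g x : ℝ≥0∞)) :=
      (integrable_withDensity_iff_integrable_smul₀ hg.aemeasurable).mpr hint'
    have hintν : Integrable (fun t : ℝ => t ^ k) ν := by
      rw [hν_def]
      exact (integrable_map_measure ((continuous_pow k).aestronglyMeasurable)
        hf.aemeasurable).mpr hintwd
    refine ⟨hintν, ?_⟩
    rw [hν_def, integral_map hf.aemeasurable ((continuous_pow k).aestronglyMeasurable),
      integral_withDensity_eq_integral_smul₀ hg.aemeasurable]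
    simp only [NNReal.smul_def]
    rw [integral_congr_ae (hsmul k), hval]
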